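/- Let γ > 0 and let g : ℝ³ → [0,∞) be measurable with Φ_γ∘g Lebesgue integrable on ℝ³, and set c₁ := (3/(4π))·∫_{ℝ³} Φ_γ(g(x)) dx. Then for every x₀ ∈ ℝ³, every r > 0, and every A ≥ 0 satisfying Φ_γ(A) = c₁·r^{−3}, one has ∫_{B_r(x₀)} g(x) dx ≤ (4π r³/3)·A. -/

import Mathlib

open MeasureTheory Real Set

private lemma log_one_add_nonneg {s : ℝ} (hs : 0 ≤ s) : 0 ≤ Real.log (1 + s) :=
  Real.log_nonneg (by linarith)

private lemma F_nonneg (γ : ℝ) {s : ℝ} (hs : 0 ≤ s) :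
    0 ≤ s * Real.log (1 + s) ^ (1 + γ) :=
  mul_nonneg hs (Real.rpow_nonneg (log_one_add_nonneg hs) _)

private lemma F_strictMonoOn (γ : ℝ) (hγ : 0 < γ) :
    StrictMonoOn (fun s : ℝ => s * Real.log (1 + s) ^ (1 + γ)) (Ici 0) := by
  intro a ha b hb hab
  simp only [mem_Ici] at ha hb
  have hb0 : (0:ℝ) < b := lt_of_le_of_lt ha hab
  have hLb : 0 < Real.log (1 + b) := Real.log_pos (by linarith)
  have hLbp : 0 < Real.log (1 + b) ^ (1 + γ) := Real.rpow_pos_of_pos hLb _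
  have h1 : a * Real.log (1 + a) ^ (1 + γ) ≤ a * Real.log (1 + b) ^ (1 + γ) := by
    refine mul_le_mul_of_nonneg_left ?_ ha
    exact Real.rpow_le_rpow (log_one_add_nonneg ha)
      (Real.log_le_log (by linarith) (by linarith)) (by linarith)
  have h2 : a * Real.log (1 + b) ^ (1 + γ) < b * Real.log (1 + b) ^ (1 + γ) :=
    mul_lt_mul_of_pos_right hab hLbp
  exact lt_of_le_of_lt h1 h2

private lemma hasDerivAt_F (γ : ℝ) {s : ℝ} (hs : 0 < s) :
    HasDerivAt (fun s : ℝ => s * Real.log (1 + s) ^ (1 + γ))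
      (Real.log (1 + s) ^ (1 + γ) + s * ((1 + γ) * Real.log (1 + s) ^ γ * (1 / (1 + s)))) s := by
  have h1 : HasDerivAt (fun s : ℝ => 1 + s) 1 s := by
    simpa using (hasDerivAt_id s).const_add (1 : ℝ)
  have h2 : HasDerivAt (fun s : ℝ => Real.log (1 + s)) (1 / (1 + s)) s := by
    simpa using h1.log (by linarith : (1:ℝ) + s ≠ 0)
  have hlogpos : 0 < Real.log (1 + s) := Real.log_pos (by linarith)
  have h3 : HasDerivAt (fun s : ℝ => Real.log (1 + s) ^ (1 + γ))
      ((1 + γ) * Real.log (1 + s) ^ γ * (1 / (1 + s))) s := by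
    have := h2.rpow_const (p := 1 + γ) (Or.inl hlogpos.ne')
    convert this using 1
    rw [show (1 : ℝ) + γ - 1 = γ by ring]
    ring
  have : HasDerivAt (fun y : ℝ => y * Real.log (1 + y) ^ (1 + γ))
      (1 * Real.log (1 + s) ^ (1 + γ) + s * ((1 + γ) * Real.log (1 + s) ^ γ * (1 / (1 + s)))) s :=
    (hasDerivAt_id s).fun_mul h3
  convert this using 1
  ring

private lemma derivF_mono (γ : ℝ) (hγ : 0 < γ) :
    MonotoneOn (fun s : ℝ =>
      Real.log (1 + s) ^ (1 + γ) + s * ((1 + γ) * Real.log (1 + s) ^ γ * (1 / (1 + s))))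
      (Ioi 0) := by
  have key : ∀ x : ℝ, 0 < x →
      x * ((1 + γ) * Real.log (1 + x) ^ γ * (1 / (1 + x)))
        = (1 + γ) * (Real.log (1 + x) ^ γ * (x / (1 + x))) := by
    intro x hx
    have : (1 : ℝ) + x ≠ 0 := by linarith
    field_simp
  intro a ha b hb hab
  simp only [mem_Ioi] at ha hb
  simp only [key a ha, key b hb]
  have hLa0 : 0 ≤ Real.log (1 + a) := log_one_add_nonneg ha.le
  have hLb0 : 0 ≤ Real.log (1 + b) := log_one_add_nonneg hb.le
  have hL : Real.log (1 + a) ≤ Real.log (1 + b) :=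
    Real.log_le_log (by linarith) (by linarith)
  have hfrac : a / (1 + a) ≤ b / (1 + b) := by
    rw [div_le_div_iff₀ (by linarith) (by linarith)]
    nlinarith
  have t1 : Real.log (1 + a) ^ (1 + γ) ≤ Real.log (1 + b) ^ (1 + γ) :=
    Real.rpow_le_rpow hLa0 hL (by linarith)
  have t2 : Real.log (1 + a) ^ γ * (a / (1 + a)) ≤ Real.log (1 + b) ^ γ * (b / (1 + b)) := by
    apply mul_le_mul (Real.rpow_le_rpow hLa0 hL hγ.le) hfrac
      (div_nonneg ha.le (by linarith)) (Real.rpow_nonneg hLb0 _)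
  have t3 : (1 + γ) * (Real.log (1 + a) ^ γ * (a / (1 + a)))
      ≤ (1 + γ) * (Real.log (1 + b) ^ γ * (b / (1 + b))) :=
    mul_le_mul_of_nonneg_left t2 (by linarith)
  linarith

private lemma contF (γ : ℝ) (hγ : 0 < γ) :
    ContinuousOn (fun s : ℝ => s * Real.log (1 + s) ^ (1 + γ)) (Ici 0) := by
  have h1 : ContinuousOn (fun s : ℝ => Real.log (1 + s)) (Ici 0) := by
    apply ContinuousOn.log (by fun_prop)
    intro x hx
    simp only [mem_Ici] at hx
    linarith
  exact continuousOn_id.mul (h1.rpow_const (fun x _ => Or.inr (by linarith)))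

private lemma convexOn_F (γ : ℝ) (hγ : 0 < γ) :
    ConvexOn ℝ (Ici 0) (fun s : ℝ => s * Real.log (1 + s) ^ (1 + γ)) := by
  apply MonotoneOn.convexOn_of_deriv (convex_Ici 0) (contF γ hγ)
  · rw [interior_Ici]
    exact fun x hx => (hasDerivAt_F γ hx).differentiableAt.differentiableWithinAt
  · rw [interior_Ici]
    exact (derivF_mono γ hγ).congr (fun x hx => ((hasDerivAt_F γ hx).deriv).symm)

private lemma convexOn_Phi (γ : ℝ) (hγ : 0 < γ) :
    ConvexOn ℝ (Ici 0)
      (fun s : ℝ => (s * Real.log (1 + s) ^ (1 + γ)) ^ ((3:ℝ)/2)) := by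
  refine ⟨convex_Ici 0, fun x hx y hy a b ha hb hab => ?_⟩
  simp only [mem_Ici] at hx hy
  simp only [smul_eq_mul]
  have hxy : 0 ≤ a * x + b * y := by positivity
  have hF := (convexOn_F γ hγ).2 (mem_Ici.2 hx) (mem_Ici.2 hy) ha hb hab
  simp only [smul_eq_mul] at hF
  have step1 : ((a * x + b * y) * Real.log (1 + (a * x + b * y)) ^ (1 + γ)) ^ ((3:ℝ)/2)
      ≤ (a * (x * Real.log (1 + x) ^ (1 + γ)) + b * (y * Real.log (1 + y) ^ (1 + γ))) ^ ((3:ℝ)/2) :=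
    Real.rpow_le_rpow (F_nonneg γ hxy) hF (by norm_num)
  have step2 := (convexOn_rpow (by norm_num : (1:ℝ) ≤ 3/2)).2
    (mem_Ici.2 (F_nonneg γ hx)) (mem_Ici.2 (F_nonneg γ hy)) ha hb hab
  simp only [smul_eq_mul] at step2
  exact step1.trans step2

private lemma strictMonoOn_Phi (γ : ℝ) (hγ : 0 < γ) :
    StrictMonoOn (fun s : ℝ => (s * Real.log (1 + s) ^ (1 + γ)) ^ ((3:ℝ)/2)) (Ici 0) := by
  intro a ha b hb hab
  exact Real.rpow_lt_rpow (F_nonneg γ (mem_Ici.1 ha))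
    (F_strictMonoOn γ hγ ha hb hab) (by norm_num)

private lemma contPhi (γ : ℝ) (hγ : 0 < γ) :
    ContinuousOn (fun s : ℝ => (s * Real.log (1 + s) ^ (1 + γ)) ^ ((3:ℝ)/2)) (Ici 0) :=
  (contF γ hγ).rpow_const (fun x _ => Or.inr (by norm_num))

private lemma self_le_Phi (γ : ℝ) (hγ : 0 < γ) {s : ℝ} (hs : 0 ≤ s) :
    s ≤ 3 + (s * Real.log (1 + s) ^ (1 + γ)) ^ ((3:ℝ)/2) := by
  have hΦ0 : 0 ≤ (s * Real.log (1 + s) ^ (1 + γ)) ^ ((3:ℝ)/2) :=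
    Real.rpow_nonneg (F_nonneg γ hs) _
  rcases le_or_gt s 3 with h | h
  · linarith
  · have hL1 : 1 ≤ Real.log (1 + s) := by
      rw [Real.le_log_iff_exp_le (by linarith)]
      have := Real.exp_one_lt_d9
      linarith
    have hLp : 1 ≤ Real.log (1 + s) ^ (1 + γ) := by
      calc (1:ℝ) = 1 ^ (1 + γ) := (Real.one_rpow _).symm
        _ ≤ Real.log (1 + s) ^ (1 + γ) := Real.rpow_le_rpow (by norm_num) hL1 (by linarith)
    have h1 : s ≤ s * Real.log (1 + s) ^ (1 + γ) := le_mul_of_one_le_right (by linarith) hLp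
    have h1le : 1 ≤ s * Real.log (1 + s) ^ (1 + γ) := by linarith
    have h2 : s * Real.log (1 + s) ^ (1 + γ)
        ≤ (s * Real.log (1 + s) ^ (1 + γ)) ^ ((3:ℝ)/2) := by
      calc s * Real.log (1 + s) ^ (1 + γ)
          = (s * Real.log (1 + s) ^ (1 + γ)) ^ (1:ℝ) := (Real.rpow_one _).symm
        _ ≤ (s * Real.log (1 + s) ^ (1 + γ)) ^ ((3:ℝ)/2) :=
          Real.rpow_le_rpow_of_exponent_le h1le (by norm_num)
    linarith

private lemma volume_ball3 (x₀ : EuclideanSpace ℝ (Fin 3)) {r : ℝ} (hr : 0 < r) :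
    (volume (Metric.ball x₀ r)).toReal = 4 * π * r ^ 3 / 3 := by
  rw [EuclideanSpace.volume_ball]
  have hΓ : Real.Gamma ((Fintype.card (Fin 3) : ℝ) / 2 + 1) = 3 / 4 * Real.sqrt π := by
    rw [Fintype.card_fin]
    rw [show ((3:ℕ):ℝ) / 2 + 1 = (1/2 + 1) + 1 by norm_num]
    rw [Real.Gamma_add_one (by norm_num), Real.Gamma_add_one (by norm_num),
      Real.Gamma_one_half_eq]
    ring
  have hsqpos : 0 < Real.sqrt π := Real.sqrt_pos.mpr Real.pi_pos
  have hsq3 : Real.sqrt π ^ Fintype.card (Fin 3) = π * Real.sqrt π := by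
    rw [Fintype.card_fin]
    have : Real.sqrt π ^ 3 = Real.sqrt π ^ 2 * Real.sqrt π := by ring
    rw [this, Real.sq_sqrt Real.pi_pos.le]
  rw [hΓ, hsq3]
  have hc : π * Real.sqrt π / (3 / 4 * Real.sqrt π) = 4 * π / 3 := by
    field_simp
  rw [hc, ENNReal.toReal_mul, ENNReal.toReal_pow, ENNReal.toReal_ofReal hr.le,
    ENNReal.toReal_ofReal (by positivity)]
  rw [Fintype.card_fin]
  ring

/-- Jensen-type estimate: if `g : ℝ³ → [0,∞)` is measurable with `Φ_γ ∘ g` integrable,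
`c₁ = (3/(4π)) ∫ Φ_γ(g)`, then for all `x₀`, `r > 0` and `A ≥ 0` with `Φ_γ(A) = c₁ r⁻³`,
one has `∫_{B_r(x₀)} g ≤ (4π r³ / 3) A`.  Here `Φ_γ(s) = (s (log (1+s))^(1+γ))^(3/2)`. -/
theorem integral_ball_le_of_Phi_eq (γ : ℝ) (hγ : 0 < γ)
    (g : EuclideanSpace ℝ (Fin 3) → ℝ) (hg : Measurable g) (hg0 : ∀ x, 0 ≤ g x)
    (hint : Integrable (fun x => (g x * Real.log (1 + g x) ^ (1 + γ)) ^ ((3 : ℝ) / 2)))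
    (c₁ : ℝ)
    (hc₁ : c₁ = 3 / (4 * π) * ∫ x, (g x * Real.log (1 + g x) ^ (1 + γ)) ^ ((3 : ℝ) / 2))
    (x₀ : EuclideanSpace ℝ (Fin 3)) (r : ℝ) (hr : 0 < r) (A : ℝ) (hA : 0 ≤ A)
    (hΦA : (A * Real.log (1 + A) ^ (1 + γ)) ^ ((3 : ℝ) / 2) = c₁ * r ^ (-3 : ℝ)) :
    ∫ x in Metric.ball x₀ r, g x ≤ 4 * π * r ^ 3 / 3 * A := by
  set B := Metric.ball x₀ r with hB
  set Φ : ℝ → ℝ := fun s => (s * Real.log (1 + s) ^ (1 + γ)) ^ ((3:ℝ)/2) with hΦdef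
  haveI hfin : IsFiniteMeasure (volume.restrict B) :=
    ⟨by rw [Measure.restrict_apply_univ]; exact measure_ball_lt_top⟩
  haveI : NeZero (volume.restrict B) :=
    ⟨by rw [Ne, Measure.restrict_eq_zero]; exact (Metric.measure_ball_pos volume x₀ hr).ne'⟩
  have hV : (volume B).toReal = 4 * π * r ^ 3 / 3 := volume_ball3 x₀ hr
  have hVpos : 0 < (volume B).toReal := by
    rw [hV]; positivity
  -- integrability of g on the ball
  have hgint : Integrable g (volume.restrict B) := by
    apply Integrable.mono' ((integrable_const (3:ℝ)).add (hint.restrict (s := B)))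
      hg.aestronglyMeasurable
    filter_upwards with x
    rw [Real.norm_eq_abs, abs_of_nonneg (hg0 x)]
    exact self_le_Phi γ hγ (hg0 x)
  -- Jensen's inequality
  have hjensen : Φ (⨍ x, g x ∂(volume.restrict B)) ≤ ⨍ x, Φ (g x) ∂(volume.restrict B) :=
    (convexOn_Phi γ hγ).map_average_le (contPhi γ hγ) isClosed_Ici
      (Filter.Eventually.of_forall (fun x => hg0 x)) hgint (hint.restrict (s := B))
  set m := ⨍ x, g x ∂(volume.restrict B) with hm
  have hm0 : 0 ≤ m := by
    rw [hm, average_eq, smul_eq_mul]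
    exact mul_nonneg (by positivity) (integral_nonneg (fun x => hg0 x))
  -- the set integral of Φ ∘ g is at most the full integral
  have hΦ0 : ∀ x, 0 ≤ Φ (g x) := fun x => Real.rpow_nonneg (F_nonneg γ (hg0 x)) _
  have hsetle : ∫ x in B, Φ (g x) ≤ ∫ x, Φ (g x) :=
    setIntegral_le_integral hint (Filter.Eventually.of_forall hΦ0)
  -- Φ A equals the full integral divided by the ball volume
  have hΦA' : Φ A = (volume B).toReal⁻¹ * ∫ x, Φ (g x) := by
    have hr3 : r ^ (-3 : ℝ) = (r ^ 3)⁻¹ := by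
      rw [show (-3 : ℝ) = -((3:ℕ):ℝ) by norm_num, Real.rpow_neg hr.le, Real.rpow_natCast]
    have hπ : (0:ℝ) < π := Real.pi_pos
    rw [hΦdef]
    simp only
    rw [hΦA, hc₁, hV, hr3]
    field_simp
  have havg_le : ⨍ x, Φ (g x) ∂(volume.restrict B) ≤ Φ A := by
    rw [average_eq, measureReal_restrict_apply_univ, measureReal_def, smul_eq_mul, hΦA']
    exact mul_le_mul_of_nonneg_left hsetle (by positivity)
  have hmA : m ≤ A := by
    by_contra h
    push_neg at h
    have hlt : Φ A < Φ m := strictMonoOn_Phi γ hγ (mem_Ici.2 hA) (mem_Ici.2 hm0) h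
    have := hjensen.trans havg_le
    linarith
  have hInt_eq : ∫ x in B, g x = (volume B).toReal * m := by
    have : m = (volume B).toReal⁻¹ * ∫ x in B, g x := by
      rw [hm, average_eq, measureReal_restrict_apply_univ, measureReal_def, smul_eq_mul]
    rw [this]
    field_simp
  rw [hInt_eq, hV]
  exact mul_le_mul_of_nonneg_left hmA (by positivity)
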